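/- arXiv:1608.02444 — 4 statements merged into one kernel-verified Lean document; each statement's English description precedes it below -/
import Mathlib

section
/- The ten matrices u_0, u_1, u_2, u_3 together with the six commutators [u_a,u_b] for 0 ≤ a < b ≤ 3 span the real vector space sp(2) of quaternionic anti-Hermitian 2×2 matrices (which has real dimension 10). -/
open Quaternion Matrix

/-- The real Lie algebra `sp(2)` of quaternionic anti-Hermitian 2×2 matrices. -/
def sp2 : Submodule ℝ (Matrix (Fin 2) (Fin 2) ℍ[ℝ]) where
  carrier := {A | Aᴴ = -A}
  zero_mem' := by simp
  add_mem' := by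
    intro a b ha hb
    simp only [Set.mem_setOf_eq] at *
    rw [Matrix.conjTranspose_add, ha, hb]; abel
  smul_mem' := by
    intro c A hA
    simp only [Set.mem_setOf_eq] at *
    refine Matrix.ext fun i j => ?_
    have h : star (A j i) = -(A i j) := by
      have := congrFun (congrFun hA i) j
      simpa [Matrix.conjTranspose_apply] using this
    simp only [Matrix.conjTranspose_apply, Matrix.smul_apply, Matrix.neg_apply,
      Quaternion.star_smul, h, smul_neg]

abbrev Qi : ℍ[ℝ] := ⟨0, 1, 0, 0⟩
abbrev Qj : ℍ[ℝ] := ⟨0, 0, 1, 0⟩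
abbrev Qk : ℍ[ℝ] := ⟨0, 0, 0, 1⟩

lemma aux_mem (α β γ δ : ℍ[ℝ]) (hα : star α = -α) (hγ : star γ = -γ)
    (hδ : star β = -δ) : !![α, β; δ, γ] ∈ sp2 := by
  show _ᴴ = -_
  refine Matrix.ext fun i j => ?_
  fin_cases i <;> fin_cases j <;>
    simp [Matrix.conjTranspose_apply, hα, hγ, hδ]
  · rw [← neg_neg δ, ← hδ]; simp

lemma hc1 : (!![0, 1; -1, 0] : Matrix (Fin 2) (Fin 2) ℍ[ℝ]) * !![0, Qi; Qi, 0]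
    - !![0, Qi; Qi, 0] * !![0, 1; -1, 0] = !![⟨0,2,0,0⟩, 0; 0, ⟨0,-2,0,0⟩] := by
  refine Matrix.ext fun i j => ?_
  fin_cases i <;> fin_cases j <;>
    simp [Matrix.mul_apply, Fin.sum_univ_two] <;> ext <;> simp <;> norm_num
lemma hc2 : (!![0, 1; -1, 0] : Matrix (Fin 2) (Fin 2) ℍ[ℝ]) * !![0, Qj; Qj, 0]
    - !![0, Qj; Qj, 0] * !![0, 1; -1, 0] = !![⟨0,0,2,0⟩, 0; 0, ⟨0,0,-2,0⟩] := by
  refine Matrix.ext fun i j => ?_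
  fin_cases i <;> fin_cases j <;>
    simp [Matrix.mul_apply, Fin.sum_univ_two] <;> ext <;> simp <;> norm_num
lemma hc3 : (!![0, 1; -1, 0] : Matrix (Fin 2) (Fin 2) ℍ[ℝ]) * !![0, Qk; Qk, 0]
    - !![0, Qk; Qk, 0] * !![0, 1; -1, 0] = !![⟨0,0,0,2⟩, 0; 0, ⟨0,0,0,-2⟩] := by
  refine Matrix.ext fun i j => ?_
  fin_cases i <;> fin_cases j <;>
    simp [Matrix.mul_apply, Fin.sum_univ_two] <;> ext <;> simp <;> norm_num
lemma hc4 : (!![0, Qi; Qi, 0] : Matrix (Fin 2) (Fin 2) ℍ[ℝ]) * !![0, Qj; Qj, 0]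
    - !![0, Qj; Qj, 0] * !![0, Qi; Qi, 0] = !![⟨0,0,0,2⟩, 0; 0, ⟨0,0,0,2⟩] := by
  refine Matrix.ext fun i j => ?_
  fin_cases i <;> fin_cases j <;>
    simp [Matrix.mul_apply, Fin.sum_univ_two] <;> ext <;> simp <;> norm_num
lemma hc5 : (!![0, Qi; Qi, 0] : Matrix (Fin 2) (Fin 2) ℍ[ℝ]) * !![0, Qk; Qk, 0]
    - !![0, Qk; Qk, 0] * !![0, Qi; Qi, 0] = !![⟨0,0,-2,0⟩, 0; 0, ⟨0,0,-2,0⟩] := by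
  refine Matrix.ext fun i j => ?_
  fin_cases i <;> fin_cases j <;>
    simp [Matrix.mul_apply, Fin.sum_univ_two] <;> ext <;> simp <;> norm_num
lemma hc6 : (!![0, Qj; Qj, 0] : Matrix (Fin 2) (Fin 2) ℍ[ℝ]) * !![0, Qk; Qk, 0]
    - !![0, Qk; Qk, 0] * !![0, Qj; Qj, 0] = !![⟨0,2,0,0⟩, 0; 0, ⟨0,2,0,0⟩] := by
  refine Matrix.ext fun i j => ?_
  fin_cases i <;> fin_cases j <;>
    simp [Matrix.mul_apply, Fin.sum_univ_two] <;> ext <;> simp <;> norm_num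

set_option maxHeartbeats 2000000 in
theorem stmt2 :
    let qi : ℍ[ℝ] := ⟨0, 1, 0, 0⟩
    let qj : ℍ[ℝ] := ⟨0, 0, 1, 0⟩
    let qk : ℍ[ℝ] := ⟨0, 0, 0, 1⟩
    let u0 : Matrix (Fin 2) (Fin 2) ℍ[ℝ] := !![0, 1; -1, 0]
    let u1 : Matrix (Fin 2) (Fin 2) ℍ[ℝ] := !![0, qi; qi, 0]
    let u2 : Matrix (Fin 2) (Fin 2) ℍ[ℝ] := !![0, qj; qj, 0]
    let u3 : Matrix (Fin 2) (Fin 2) ℍ[ℝ] := !![0, qk; qk, 0]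
    Submodule.span ℝ
      ({u0, u1, u2, u3,
        u0 * u1 - u1 * u0, u0 * u2 - u2 * u0, u0 * u3 - u3 * u0,
        u1 * u2 - u2 * u1, u1 * u3 - u3 * u1, u2 * u3 - u3 * u2} :
        Set (Matrix (Fin 2) (Fin 2) ℍ[ℝ])) = sp2 := by
  intro qi qj qk u0 u1 u2 u3
  have e1 : u0 * u1 - u1 * u0 = !![(⟨0,2,0,0⟩ : ℍ[ℝ]), 0; 0, ⟨0,-2,0,0⟩] := hc1
  have e2 : u0 * u2 - u2 * u0 = !![(⟨0,0,2,0⟩ : ℍ[ℝ]), 0; 0, ⟨0,0,-2,0⟩] := hc2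
  have e3 : u0 * u3 - u3 * u0 = !![(⟨0,0,0,2⟩ : ℍ[ℝ]), 0; 0, ⟨0,0,0,-2⟩] := hc3
  have e4 : u1 * u2 - u2 * u1 = !![(⟨0,0,0,2⟩ : ℍ[ℝ]), 0; 0, ⟨0,0,0,2⟩] := hc4
  have e5 : u1 * u3 - u3 * u1 = !![(⟨0,0,-2,0⟩ : ℍ[ℝ]), 0; 0, ⟨0,0,-2,0⟩] := hc5
  have e6 : u2 * u3 - u3 * u2 = !![(⟨0,2,0,0⟩ : ℍ[ℝ]), 0; 0, ⟨0,2,0,0⟩] := hc6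
  apply le_antisymm
  · rw [Submodule.span_le]
    intro x hx
    simp only [Set.mem_insert_iff, Set.mem_singleton_iff] at hx
    rcases hx with rfl|rfl|rfl|rfl|rfl|rfl|rfl|rfl|rfl|rfl
    · exact aux_mem 0 1 0 (-1) (by simp) (by simp) (by simp)
    · exact aux_mem 0 qi 0 qi (by simp) (by simp) (Quaternion.star_eq_neg.mpr rfl)
    · exact aux_mem 0 qj 0 qj (by simp) (by simp) (Quaternion.star_eq_neg.mpr rfl)
    · exact aux_mem 0 qk 0 qk (by simp) (by simp) (Quaternion.star_eq_neg.mpr rfl)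
    · rw [e1]; exact aux_mem _ 0 _ 0 (Quaternion.star_eq_neg.mpr rfl) (Quaternion.star_eq_neg.mpr rfl) (by simp)
    · rw [e2]; exact aux_mem _ 0 _ 0 (Quaternion.star_eq_neg.mpr rfl) (Quaternion.star_eq_neg.mpr rfl) (by simp)
    · rw [e3]; exact aux_mem _ 0 _ 0 (Quaternion.star_eq_neg.mpr rfl) (Quaternion.star_eq_neg.mpr rfl) (by simp)
    · rw [e4]; exact aux_mem _ 0 _ 0 (Quaternion.star_eq_neg.mpr rfl) (Quaternion.star_eq_neg.mpr rfl) (by simp)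
    · rw [e5]; exact aux_mem _ 0 _ 0 (Quaternion.star_eq_neg.mpr rfl) (Quaternion.star_eq_neg.mpr rfl) (by simp)
    · rw [e6]; exact aux_mem _ 0 _ 0 (Quaternion.star_eq_neg.mpr rfl) (Quaternion.star_eq_neg.mpr rfl) (by simp)
  · intro A hA
    have hA' : Aᴴ = -A := hA
    have h00 : star (A 0 0) = -(A 0 0) := by
      have := congrFun (congrFun hA' 0) 0
      simpa [Matrix.conjTranspose_apply] using this
    have h11 : star (A 1 1) = -(A 1 1) := by
      have := congrFun (congrFun hA' 1) 1
      simpa [Matrix.conjTranspose_apply] using this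
    have h10 : star (A 0 1) = -(A 1 0) := by
      have := congrFun (congrFun hA' 1) 0
      simpa [Matrix.conjTranspose_apply] using this
    have r00 : (A 0 0).re = 0 := by
      have := congrArg QuaternionAlgebra.re h00; simp at this; linarith
    have r11 : (A 1 1).re = 0 := by
      have := congrArg QuaternionAlgebra.re h11; simp at this; linarith
    have r10re : (A 1 0).re = -(A 0 1).re := by
      have := congrArg QuaternionAlgebra.re h10; simp at this; linarith
    have r10i : (A 1 0).imI = (A 0 1).imI := by
      have := congrArg QuaternionAlgebra.imI h10; simp at this; linarith
    have r10j : (A 1 0).imJ = (A 0 1).imJ := by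
      have := congrArg QuaternionAlgebra.imJ h10; simp at this; linarith
    have r10k : (A 1 0).imK = (A 0 1).imK := by
      have := congrArg QuaternionAlgebra.imK h10; simp at this; linarith
    have key : A =
        (A 0 1).re • u0 + (A 0 1).imI • u1 + (A 0 1).imJ • u2 + (A 0 1).imK • u3
        + (((A 0 0).imI - (A 1 1).imI)/4) • (u0 * u1 - u1 * u0)
        + (((A 0 0).imJ - (A 1 1).imJ)/4) • (u0 * u2 - u2 * u0)
        + (((A 0 0).imK - (A 1 1).imK)/4) • (u0 * u3 - u3 * u0)
        + (((A 0 0).imK + (A 1 1).imK)/4) • (u1 * u2 - u2 * u1)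
        + (-((A 0 0).imJ + (A 1 1).imJ)/4) • (u1 * u3 - u3 * u1)
        + (((A 0 0).imI + (A 1 1).imI)/4) • (u2 * u3 - u3 * u2) := by
      rw [e1, e2, e3, e4, e5, e6]
      refine Matrix.ext fun i j => ?_
      fin_cases i <;> fin_cases j <;> ext <;>
        simp [u0, u1, u2, u3, qi, qj, qk, Matrix.add_apply, Matrix.smul_apply,
          r00, r11, r10re, r10i, r10j, r10k] <;>
        repeat (first | erw [Quaternion.re_smul] | erw [Quaternion.imI_smul] |
          erw [Quaternion.imJ_smul] | erw [Quaternion.imK_smul])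
      all_goals simp [r00, r11, r10re, r10i, r10j, r10k]
      all_goals ring
    rw [key]
    have hs : ∀ y ∈ ({u0, u1, u2, u3,
        u0 * u1 - u1 * u0, u0 * u2 - u2 * u0, u0 * u3 - u3 * u0,
        u1 * u2 - u2 * u1, u1 * u3 - u3 * u1, u2 * u3 - u3 * u2} :
        Set (Matrix (Fin 2) (Fin 2) ℍ[ℝ])), y ∈ Submodule.span ℝ
        ({u0, u1, u2, u3,
        u0 * u1 - u1 * u0, u0 * u2 - u2 * u0, u0 * u3 - u3 * u0,
        u1 * u2 - u2 * u1, u1 * u3 - u3 * u1, u2 * u3 - u3 * u2} :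
        Set (Matrix (Fin 2) (Fin 2) ℍ[ℝ])) := fun y hy => Submodule.subset_span hy
    refine Submodule.add_mem _ (Submodule.add_mem _ (Submodule.add_mem _
      (Submodule.add_mem _ (Submodule.add_mem _ (Submodule.add_mem _
      (Submodule.add_mem _ (Submodule.add_mem _ (Submodule.add_mem _
      (Submodule.smul_mem _ _ (hs _ (by simp)))
      (Submodule.smul_mem _ _ (hs _ (by simp))))
      (Submodule.smul_mem _ _ (hs _ (by simp))))
      (Submodule.smul_mem _ _ (hs _ (by simp))))
      (Submodule.smul_mem _ _ (hs _ (by simp))))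
      (Submodule.smul_mem _ _ (hs _ (by simp))))
      (Submodule.smul_mem _ _ (hs _ (by simp))))
      (Submodule.smul_mem _ _ (hs _ (by simp))))
      (Submodule.smul_mem _ _ (hs _ (by simp))))
      (Submodule.smul_mem _ _ (hs _ (by simp)))
end

section
/- Let v ∈ ℍ, v ≠ 0, and let a ∈ ℍ with conj(a) = -a. Set θ_a = conj(v)·a·v - a and b_a = -(v·θ_a)/(2|v|²). Then conj(b_a)·v - conj(v)·b_a = θ_a, i.e. (a, b_a) solves the equation conj(v)·a·v - a = conj(b)·v - conj(v)·b. -/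
open Quaternion

theorem stmt6 (v : ℍ[ℝ]) (hv : v ≠ 0) (a : ℍ[ℝ]) (ha : star a = -a) :
    let θ : ℍ[ℝ] := star v * a * v - a
    let b : ℍ[ℝ] := -((2 * normSq v)⁻¹ • (v * θ))
    star b * v - star v * b = θ := by
  intro θ b
  have hn0 : normSq v ≠ 0 := by simpa [Quaternion.normSq_eq_zero] using hv
  have hθ : star θ = -θ := by
    simp only [θ, star_sub, star_mul, star_star, ha, mul_neg, neg_mul, neg_sub, mul_assoc]
    abel
  have hvv : star v * v = ((normSq v : ℝ) : ℍ[ℝ]) := Quaternion.star_mul_self v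
  have h1 : star b * v = ((2 * normSq v)⁻¹ * normSq v) • θ := by
    simp only [b, star_neg, Quaternion.star_smul, star_mul, neg_mul, smul_mul_assoc, hθ]
    rw [mul_assoc, hvv, Quaternion.mul_coe_eq_smul]
    simp [smul_smul, mul_comm]
  have h2 : star v * b = -(((2 * normSq v)⁻¹ * normSq v) • θ) := by
    simp only [b, mul_neg, mul_smul_comm]
    rw [← mul_assoc, hvv, Quaternion.coe_mul_eq_smul]
    simp [smul_smul, mul_comm]
  rw [h1, h2, sub_neg_eq_add, ← two_smul ℝ, smul_smul]
  rw [show (2:ℝ) * ((2 * normSq v)⁻¹ * normSq v) = 1 by field_simp]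
  simp
end

section
/- Let v = v₀+v₁i ∈ ℂ with v₁ ≠ 0 and v² ≠ -1. Then the two complex 2×2 matrices S(v) = [[1, (v-|v|²conj(v))/(2|v|²)],[(v-|v|²conj(v))/(2|v|²), -1]] and T(v) (with entries t₁₁ = (1+|v|²)v(1+conj(v)²)/(|v|²(conj(v)-v)), t₁₂ = 2(1+|v|²)(1+conj(v)²)/((1-conj(v)²)(v-conj(v))), t₂₁ = t₁₂ by symmetry, t₂₂ = -t₁₁) are linearly independent over ℂ. -/
open Complex Matrix

theorem stmt10 (v : ℂ) (hv : v.im ≠ 0) (hv2 : v ^ 2 ≠ -1) :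
    let cv : ℂ := starRingEnd ℂ v
    let nv : ℂ := (Complex.normSq v : ℂ)
    let s12 : ℂ := (v - nv * cv) / (2 * nv)
    let t11 : ℂ := (1 + nv) * v * (1 + cv ^ 2) / (nv * (cv - v))
    let t12 : ℂ := 2 * (1 + nv) * (1 + cv ^ 2) / ((1 - cv ^ 2) * (v - cv))
    let S : Matrix (Fin 2) (Fin 2) ℂ := !![1, s12; s12, -1]
    let T : Matrix (Fin 2) (Fin 2) ℂ := !![t11, t12; t12, -t11]
    LinearIndependent ℂ ![S, T] := by
  intro cv nv s12 t11 t12 S T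
  -- basic nonvanishing facts
  have hvne : v ≠ 0 := fun h => hv (by simp [h])
  have hcvim : cv.im ≠ 0 := by simpa [cv] using neg_ne_zero.2 hv
  have hcvne : cv ≠ 0 := fun h => hcvim (by simp [h])
  have hnv : nv = v * cv := by
    simp [nv, cv, ← Complex.mul_conj]
  have hnvne : nv ≠ 0 := by rw [hnv]; exact mul_ne_zero hvne hcvne
  have hnv1 : (1 : ℂ) + nv ≠ 0 := by
    intro h
    have : (Complex.normSq v : ℝ) = -1 := by
      have := congrArg Complex.re h
      simp [nv] at this
      linarith
    nlinarith [Complex.normSq_nonneg v]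
  have hcv2 : (1 : ℂ) + cv ^ 2 ≠ 0 := by
    intro h
    apply hv2
    have : cv ^ 2 = -1 := by linear_combination h
    have := congrArg (starRingEnd ℂ) this
    simpa [cv] using this
  have hcv2' : (1 : ℂ) - cv ^ 2 ≠ 0 := by
    intro h
    have hc : cv ^ 2 = 1 := by linear_combination -h
    have : (cv - 1) * (cv + 1) = 0 := by linear_combination hc
    rcases mul_eq_zero.1 this with h' | h'
    · have : cv = 1 := by linear_combination h'
      exact hcvim (by simp [this])
    · have : cv = -1 := by linear_combination h'
      exact hcvim (by simp [this])
  have hvcv : v - cv ≠ 0 := by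
    intro h
    have := congrArg Complex.im h
    simp [cv] at this
    exact hv (by linarith)
  have hcvv : cv - v ≠ 0 := fun h => hvcv (by linear_combination -h)
  have hkey : t12 - t11 * s12 ≠ 0 := by
    intro h
    have h' : t12 = t11 * s12 := by linear_combination h
    have h'' : (2*(1+nv)*(1+cv^2)/((1-cv^2)*(v-cv)))
        = ((1+nv)*v*(1+cv^2)/(nv*(cv-v))) * ((v-nv*cv)/(2*nv)) := h'
    rw [hnv] at h''
    field_simp at h''
    have hfac : v^2*(1+v*cv)*(cv-v)*((1+cv^2)^3) = 0 := by linear_combination v^2*(1+cv^2)*h''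
    have hne : v^2*(1+v*cv)*(cv-v)*((1+cv^2)^3) ≠ 0 := by
      rw [hnv] at hnv1
      exact mul_ne_zero (mul_ne_zero (mul_ne_zero (pow_ne_zero 2 hvne) hnv1) hcvv)
        (pow_ne_zero 3 hcv2)
    exact hne hfac
  rw [LinearIndependent.pair_iff]
  intro a b hab
  have e1 : a * 1 + b * t11 = 0 := by
    have := congrFun (congrFun hab 0) 0
    simpa [S, T, smul_eq_mul] using this
  have e2 : a * s12 + b * t12 = 0 := by
    have := congrFun (congrFun hab 0) 1
    simpa [S, T, smul_eq_mul] using this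
  have hb : b = 0 := by
    have : b * (t12 - t11 * s12) = 0 := by linear_combination e2 - s12 * e1
    exact (mul_eq_zero.1 this).resolve_right hkey
  have ha : a = 0 := by
    have := e1
    rw [hb] at this
    simpa using this
  exact ⟨ha, hb⟩
end

section
/- Let w = a + b·j ∈ ℍ with a,b ∈ ℂ, |a|²+|b|² = 1/2, and suppose |a|² - |b|² ≠ 1/4. If μ is a purely imaginary quaternion and d₁ ∈ ℝ satisfy w·μ·conj(w) = μ/4 - (i·μ·i)/4 - (d₁/2)·i, together with the conditions: (from separating real equations) μ = -(d₁i + d₂j + d₃k) for some d₂,d₃ ∈ ℝ and w·μ·conj(w) = -d₁·i, then μ = 0 and d₁ = 0. -/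
open Quaternion

theorem stmt14 (a b : ℂ) (hab : Complex.normSq a + Complex.normSq b = 1 / 2)
    (hne : Complex.normSq a - Complex.normSq b ≠ 1 / 4)
    (μ : ℍ[ℝ]) (hμ : μ.re = 0) (d1 d2 d3 : ℝ)
    (h1 : let qi : ℍ[ℝ] := ⟨0, 1, 0, 0⟩
          let w : ℍ[ℝ] := ⟨a.re, a.im, b.re, b.im⟩
          w * μ * star w =
            (4 : ℝ)⁻¹ • μ - (4 : ℝ)⁻¹ • (qi * μ * qi) - (d1 / 2) • qi)
    (h2 : let qi : ℍ[ℝ] := ⟨0, 1, 0, 0⟩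
          let qj : ℍ[ℝ] := ⟨0, 0, 1, 0⟩
          let qk : ℍ[ℝ] := ⟨0, 0, 0, 1⟩
          μ = -(d1 • qi + d2 • qj + d3 • qk))
    (h3 : let qi : ℍ[ℝ] := ⟨0, 1, 0, 0⟩
          let w : ℍ[ℝ] := ⟨a.re, a.im, b.re, b.im⟩
          w * μ * star w = -(d1 • qi)) :
    μ = 0 ∧ d1 = 0 := by
  simp only at h2 h3
  subst h2
  set p := a.re with hp
  set q := a.im with hq
  set r := b.re with hr
  set s := b.im with hs
  have habs : p * p + q * q + (r * r + s * s) = 1 / 2 := by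
    simpa [Complex.normSq_apply] using hab
  have hnes : p * p + q * q - (r * r + s * s) ≠ 1 / 4 := by
    simpa [Complex.normSq_apply] using hne
  have h3' := h3
  obtain ⟨W, hW⟩ : ∃ W : ℍ[ℝ], W = ⟨p, q, r, s⟩ := ⟨_, rfl⟩
  obtain ⟨QI, hI⟩ : ∃ W : ℍ[ℝ], W = ⟨0, 1, 0, 0⟩ := ⟨_, rfl⟩
  obtain ⟨QJ, hJ⟩ : ∃ W : ℍ[ℝ], W = ⟨0, 0, 1, 0⟩ := ⟨_, rfl⟩
  obtain ⟨QK, hK⟩ : ∃ W : ℍ[ℝ], W = ⟨0, 0, 0, 1⟩ := ⟨_, rfl⟩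
  rw [← hW, ← hI, ← hJ, ← hK] at h3'
  have w0 : W.re = p := by rw [hW]
  have w1 : W.imI = q := by rw [hW]
  have w2 : W.imJ = r := by rw [hW]
  have w3 : W.imK = s := by rw [hW]
  have i0 : QI.re = 0 := by rw [hI]
  have i1 : QI.imI = 1 := by rw [hI]
  have i2 : QI.imJ = 0 := by rw [hI]
  have i3 : QI.imK = 0 := by rw [hI]
  have j0 : QJ.re = 0 := by rw [hJ]
  have j1 : QJ.imI = 0 := by rw [hJ]
  have j2 : QJ.imJ = 1 := by rw [hJ]
  have j3 : QJ.imK = 0 := by rw [hJ]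
  have k0 : QK.re = 0 := by rw [hK]
  have k1 : QK.imI = 0 := by rw [hK]
  have k2 : QK.imJ = 0 := by rw [hK]
  have k3 : QK.imK = 1 := by rw [hK]
  rw [Quaternion.ext_iff] at h3'
  simp [Quaternion.re_mul, Quaternion.imI_mul, Quaternion.imJ_mul,
    Quaternion.imK_mul, w0, w1, w2, w3, i0, i1, i2, i3, j0, j1, j2, j3, k0, k1, k2, k3] at h3'
  obtain ⟨e0, e1, e2, e3⟩ := h3'
  have key : d1 * (1 / 4 - ((p * p + q * q) - (r * r + s * s))) = 0 := by
    linear_combination 2 * ((p * r - q * s) * e3 - (p * s + q * r) * e2)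
      - ((p * p + q * q) - (r * r + s * s)) * e1
      - d1 * (1 / 2 + (p * p + q * q) + (r * r + s * s)) * habs
  have hd1 : d1 = 0 := by
    rcases mul_eq_zero.mp key with h | h
    · exact h
    · exact absurd (by linarith : p * p + q * q - (r * r + s * s) = 1 / 4) hnes
  subst hd1
  refine ⟨?_, rfl⟩
  replace h3 := h3.trans (neg_eq_zero.mpr (zero_smul ℝ _))
  set w : ℍ[ℝ] := ⟨p, q, r, s⟩ with hw
  have hwne : w ≠ 0 := by
    intro h
    rw [Quaternion.ext_iff] at h
    simp at h
    rw [← w0, ← w1, ← w2, ← w3, hW, h.1, h.2.1, h.2.2.1, h.2.2.2] at habs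
    norm_num at habs
  have := mul_eq_zero.mp h3
  rcases this with h | h
  · rcases mul_eq_zero.mp h with h' | h'
    · exact absurd h' hwne
    · simpa using h'
  · exact absurd (star_eq_zero.mp h) hwne
end
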